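/- If Ψ : V → V̂ and Ψ' : W → Ŵ are linear isomorphisms between finite-dimensional real inner product spaces intertwining linear maps d : V → W and d̂ : V̂ → Ŵ (i.e., Ψ' ∘ d = d̂ ∘ Ψ), and the Poincaré inequality ‖û‖ ≤ Ĉ·‖d̂ û‖ holds on V̂ for all û ⊥ ker(d̂), then the Poincaré inequality holds on V with constant ‖Ψ⁻¹‖·Ĉ·‖Ψ'‖: for all u ∈ V orthogonal to ker(d), ‖u‖ ≤ ‖Ψ⁻¹‖·Ĉ·‖Ψ'‖·‖d u‖. -/

import Mathlib

open scoped RealInnerProductSpace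

/-- Route 3 (abstract core): transporting a Poincaré inequality through intertwining
isomorphisms (piecewise Piola transformations). -/
theorem poincare_transport_through_isomorphisms
    {V W Vhat What : Type*}
    [NormedAddCommGroup V] [InnerProductSpace ℝ V] [FiniteDimensional ℝ V]
    [NormedAddCommGroup W] [InnerProductSpace ℝ W] [FiniteDimensional ℝ W]
    [NormedAddCommGroup Vhat] [InnerProductSpace ℝ Vhat] [FiniteDimensional ℝ Vhat]
    [NormedAddCommGroup What] [InnerProductSpace ℝ What] [FiniteDimensional ℝ What]
    (d : V →ₗ[ℝ] W) (dhat : Vhat →ₗ[ℝ] What)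
    (Psi : V ≃L[ℝ] Vhat) (Psi' : W ≃L[ℝ] What)
    (hintertwine : ∀ v : V, Psi' (d v) = dhat (Psi v))
    (Chat : ℝ) (hChat : 0 < Chat)
    (hPhat : ∀ uhat : Vhat, (∀ vhat : Vhat, dhat vhat = 0 → ⟪uhat, vhat⟫ = 0) →
      ‖uhat‖ ≤ Chat * ‖dhat uhat‖) :
    ∀ u : V, (∀ v : V, d v = 0 → ⟪u, v⟫ = 0) →
      ‖u‖ ≤ ‖(Psi.symm : Vhat →L[ℝ] V)‖ * Chat * ‖(Psi' : W →L[ℝ] What)‖ * ‖d u‖ := by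
  intro u hu
  set K : Submodule ℝ Vhat := LinearMap.ker dhat with hK
  set p : Vhat := (K.orthogonalProjectionOnto (Psi u) : Vhat) with hp
  set q : Vhat := Psi u - p with hq
  have hpK : p ∈ K := (K.orthogonalProjectionOnto (Psi u)).2
  have hdp : dhat p = 0 := hpK
  -- q is orthogonal to ker dhat
  have hqorth : ∀ vhat : Vhat, dhat vhat = 0 → ⟪q, vhat⟫ = 0 := by
    intro v hv
    have hmem : q ∈ Kᗮ := K.sub_starProjection_mem_orthogonal (Psi u)
    exact real_inner_comm q v ▸ (Submodule.mem_orthogonal K q).mp hmem v hv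
  have hdq : dhat q = Psi' (d u) := by
    rw [hq, map_sub, hdp, sub_zero, hintertwine]
  have hqbound : ‖q‖ ≤ Chat * (‖(Psi' : W →L[ℝ] What)‖ * ‖d u‖) := by
    calc ‖q‖ ≤ Chat * ‖dhat q‖ := hPhat q hqorth
      _ = Chat * ‖Psi' (d u)‖ := by rw [hdq]
      _ ≤ Chat * (‖(Psi' : W →L[ℝ] What)‖ * ‖d u‖) := by
          exact mul_le_mul_of_nonneg_left ((Psi' : W →L[ℝ] What).le_opNorm (d u)) hChat.le
  -- Psi.symm p is in ker d
  have hdPsp : d (Psi.symm p) = 0 := by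
    have : Psi' (d (Psi.symm p)) = 0 := by
      rw [hintertwine, Psi.apply_symm_apply, hdp]
    have := congrArg Psi'.symm this
    simpa using this
  -- key inner product identity
  have hkey : ⟪u, u⟫ = ⟪u, Psi.symm q⟫ := by
    have hsplit : (Psi.symm q : V) = u - Psi.symm p := by
      rw [hq, map_sub, Psi.symm_apply_apply]
    rw [hsplit, inner_sub_right, hu (Psi.symm p) hdPsp, sub_zero]
  have hnorm2 : ‖u‖ ^ 2 ≤ ‖u‖ * (‖(Psi.symm : Vhat →L[ℝ] V)‖ * ‖q‖) := by
    calc ‖u‖ ^ 2 = ⟪u, u⟫ := (real_inner_self_eq_norm_sq u).symm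
      _ = ⟪u, Psi.symm q⟫ := hkey
      _ ≤ ‖u‖ * ‖Psi.symm q‖ := real_inner_le_norm u _
      _ ≤ ‖u‖ * (‖(Psi.symm : Vhat →L[ℝ] V)‖ * ‖q‖) := by
          exact mul_le_mul_of_nonneg_left ((Psi.symm : Vhat →L[ℝ] V).le_opNorm q) (norm_nonneg u)
  rcases eq_or_ne u 0 with rfl | hu0
  · simp
  · have hupos : 0 < ‖u‖ := norm_pos_iff.mpr hu0
    have h1 : ‖u‖ ≤ ‖(Psi.symm : Vhat →L[ℝ] V)‖ * ‖q‖ := by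
      have := hnorm2
      rw [sq] at this
      exact le_of_mul_le_mul_left (by linarith [this]) hupos
    calc ‖u‖ ≤ ‖(Psi.symm : Vhat →L[ℝ] V)‖ * ‖q‖ := h1
      _ ≤ ‖(Psi.symm : Vhat →L[ℝ] V)‖ * (Chat * (‖(Psi' : W →L[ℝ] What)‖ * ‖d u‖)) :=
          mul_le_mul_of_nonneg_left hqbound (norm_nonneg _)
      _ = ‖(Psi.symm : Vhat →L[ℝ] V)‖ * Chat * ‖(Psi' : W →L[ℝ] What)‖ * ‖d u‖ := by ring
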